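/- Let p = p_1 + p_2 and let φ = (φ_1, φ_2) be defined by κ^{(p)}(j) = (κ^{(p_1)}(φ_1(j)), κ^{(p_2)}(φ_2(j))). Let A = (a_j) ⊆ ℂ^{p_1} and B = (b_j) ⊆ ℂ^{p_2} be sequences such that for every j ≥ 1 the arrays A_j = (a_0,…,a_{j−1}) and B_j = (b_0,…,b_{j−1}) are completely ordered unisolvent, and let Ω = A ⊕ B with ω_j = (a_{φ_1(j)}, b_{φ_2(j)}). Then for every j ≥ 1, writing r = φ_1(j), s = φ_2(j), and z = (z^1, z^2) ∈ ℂ^{p_1} × ℂ^{p_2}: (i) if r > 0 and s > 0, then vdm(ω_0,…,ω_{j−1}, z)·vdm(a_0,…,a_{r−1})·vdm(b_0,…,b_{s−1}) = vdm(ω_0,…,ω_{j−1})·vdm(a_0,…,a_{r−1}, z^1)·vdm(b_0,…,b_{s−1}, z^2); (ii) if r > 0 and s = 0, then vdm(ω_0,…,ω_{j−1}, z)·vdm(a_0,…,a_{r−1}) = vdm(ω_0,…,ω_{j−1})·vdm(a_0,…,a_{r−1}, z^1); (iii) if r = 0 and s > 0, then vdm(ω_0,…,ω_{j−1}, z)·vdm(b_0,…,b_{s−1})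 = vdm(ω_0,…,ω_{j−1})·vdm(b_0,…,b_{s−1}, z^2). -/

import Mathlib

open scoped BigOperators
open Filter

namespace PseudoLeja

/-- Graded lexicographic strict order on multi-indices in `ℕ^p`:
`α ≺ β` iff `|α| < |β|`, or `|α| = |β|` and the leftmost nonzero entry of `α - β`
is negative (i.e. at the first index where they differ, `α` is smaller). -/
def GLexLT {p : ℕ} (α β : Fin p → ℕ) : Prop :=
  (∑ i, α i) < (∑ i, β i) ∨
    ((∑ i, α i) = (∑ i, β i) ∧ ∃ k, (∀ i, i < k → α i = β i) ∧ α k < β k)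

/-- `κ : ℕ → ℕ^p` is the (unique) enumeration of all multi-indices that is strictly
increasing from the usual order on `ℕ` to the graded lexicographic order. -/
def IsGLexEnum {p : ℕ} (κ : ℕ → Fin p → ℕ) : Prop :=
  Function.Bijective κ ∧ ∀ m n : ℕ, m < n → GLexLT (κ m) (κ n)

/-- The `N`-th monomial `e_N(z) = z^{κ(N)}`. -/
noncomputable def mono {p : ℕ} (κ : ℕ → Fin p → ℕ) (N : ℕ) (z : Fin p → ℂ) : ℂ :=
  ∏ i, z i ^ κ N i

/-- Vandermonde determinant of the points `ξ 0, …, ξ (n-1)`: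
`vdm κ n ξ = det [e_N(ξ_M)]_{0 ≤ M, N ≤ n-1}`. -/
noncomputable def vdm {p : ℕ} (κ : ℕ → Fin p → ℕ) (n : ℕ) (ξ : ℕ → Fin p → ℂ) : ℂ :=
  Matrix.det (Matrix.of fun M N : Fin n => mono κ (N : ℕ) (ξ (M : ℕ)))

/-- A set `K ⊆ ℂ^p` is determining if no nonzero polynomial in `p` complex
variables vanishes identically on `K`. -/
def Determining {p : ℕ} (K : Set (Fin p → ℂ)) : Prop :=
  ∀ P : MvPolynomial (Fin p) ℂ, (∀ z ∈ K, MvPolynomial.eval z P = 0) → P = 0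

/-- `h_d = C(p+d, d)`, the dimension of the space of polynomials of total degree
at most `d` in `p` variables. -/
def hdim (p d : ℕ) : ℕ := Nat.choose (p + d) d

/-- `l_d = p·C(p+d, p+1)`, the degree of the Vandermonde determinant of `h_d` points. -/
def ldim (p d : ℕ) : ℕ := p * Nat.choose (p + d) (p + 1)

/-- `V_j(K)`, the maximal modulus of the Vandermonde determinant of `j` points of `K`. -/
noncomputable def Vsup {p : ℕ} (κ : ℕ → Fin p → ℕ) (K : Set (Fin p → ℂ)) (j : ℕ) : ℝ :=
  sSup { v : ℝ | ∃ ξ : ℕ → Fin p → ℂ, (∀ i, ξ i ∈ K) ∧ v = ‖vdm κ j ξ‖ }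

/-- `(ξ_j)_{j≥0} ⊆ K` is a pseudo Leja sequence for `K` with Edrei growth `(M_j)_{j≥1}`:
`M_j ≥ 1`, `M_j·|vdm(ξ_0,…,ξ_j)| ≥ max_{z∈K} |vdm(ξ_0,…,ξ_{j-1},z)|` for `j ≥ 1`, and
`lim_{d→∞} (max_{h_{d-1} ≤ j < h_d} M_j)^{1/d} = 1`. -/
def IsPseudoLeja {p : ℕ} (κ : ℕ → Fin p → ℕ) (K : Set (Fin p → ℂ))
    (ξ : ℕ → Fin p → ℂ) (M : ℕ → ℝ) : Prop :=
  (∀ j, ξ j ∈ K) ∧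
  (∀ j, 1 ≤ j → 1 ≤ M j) ∧
  (∀ j, 1 ≤ j → ∀ z ∈ K,
    ‖vdm κ (j + 1) (Function.update ξ j z)‖ ≤
      M j * ‖vdm κ (j + 1) ξ‖) ∧
  Filter.Tendsto
    (fun d : ℕ => (sSup (M '' Set.Ico (hdim p (d - 1)) (hdim p d))) ^ ((d : ℝ)⁻¹))
    Filter.atTop (nhds 1)


lemma glexlt_irrefl {p : ℕ} (α : Fin p → ℕ) : ¬ GLexLT α α := by
  rintro (h | ⟨-, k, -, hk⟩)
  · exact lt_irrefl _ h
  · exact lt_irrefl _ hk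

lemma glexlt_asymm {p : ℕ} {α β : Fin p → ℕ} (h1 : GLexLT α β) (h2 : GLexLT β α) : False := by
  rcases h1 with h1 | ⟨e1, k1, pre1, lt1⟩ <;> rcases h2 with h2 | ⟨e2, k2, pre2, lt2⟩
  · omega
  · omega
  · omega
  · rcases lt_trichotomy k1 k2 with h | h | h
    · exact absurd (pre2 k1 h) (by omega)
    · subst h; omega
    · exact absurd (pre1 k2 h) (by omega)

lemma glexle_sum_le {p : ℕ} {α β : Fin p → ℕ} (h : GLexLT α β ∨ α = β) :
    (∑ i, α i) ≤ ∑ i, β i := by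
  rcases h with (h | ⟨e, -⟩) | rfl
  · omega
  · omega
  · exact le_refl _

lemma enum_le {p : ℕ} {κ : ℕ → Fin p → ℕ} (hκ : IsGLexEnum κ) {m n : ℕ}
    (h : GLexLT (κ m) (κ n) ∨ κ m = κ n) : m ≤ n := by
  by_contra hc
  push_neg at hc
  have h2 := hκ.2 n m hc
  rcases h with h | h
  · exact glexlt_asymm h h2
  · rw [h] at h2; exact glexlt_irrefl _ h2

lemma enum_mono_le {p : ℕ} {κ : ℕ → Fin p → ℕ} (hκ : IsGLexEnum κ) {m n : ℕ} (h : m ≤ n) :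
    GLexLT (κ m) (κ n) ∨ κ m = κ n := by
  rcases eq_or_lt_of_le h with rfl | h
  · exact Or.inr rfl
  · exact Or.inl (hκ.2 _ _ h)

lemma enum_zero {p : ℕ} {κ : ℕ → Fin p → ℕ} (hκ : IsGLexEnum κ) : κ 0 = fun _ => 0 := by
  obtain ⟨m, hm⟩ := hκ.1.2 (fun _ => 0)
  rcases Nat.eq_zero_or_pos m with rfl | hpos
  · exact hm
  · exfalso
    have h := hκ.2 0 m hpos
    rw [hm] at h
    rcases h with h | ⟨-, k, -, hk⟩
    · simp at h
    · exact Nat.not_lt_zero _ hk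

lemma fin_add_cases {p₁ p₂ : ℕ} (i : Fin (p₁ + p₂)) :
    (∃ i₀ : Fin p₁, i = Fin.castAdd p₂ i₀) ∨ ∃ i₀ : Fin p₂, i = Fin.natAdd p₁ i₀ := by
  by_cases h : (i : ℕ) < p₁
  · exact Or.inl ⟨⟨i, h⟩, by ext; rfl⟩
  · right
    have := i.isLt
    refine ⟨⟨(i : ℕ) - p₁, by omega⟩, ?_⟩
    ext
    simp only [Fin.natAdd]
    omega

lemma sum_append {p₁ p₂ : ℕ} (α : Fin p₁ → ℕ) (β : Fin p₂ → ℕ) :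
    ∑ i, Fin.append α β i = (∑ i, α i) + ∑ i, β i := by
  rw [Fin.sum_univ_add]
  simp [Fin.append_left, Fin.append_right]

lemma append_inj {p₁ p₂ : ℕ} {α α' : Fin p₁ → ℕ} {β β' : Fin p₂ → ℕ}
    (h : Fin.append α β = Fin.append α' β') : α = α' ∧ β = β' := by
  constructor
  · funext i
    have := congrFun h (Fin.castAdd p₂ i)
    simpa [Fin.append_left] using this
  · funext i
    have := congrFun h (Fin.natAdd p₁ i)
    simpa [Fin.append_right] using this

lemma glexlt_append_left {p₁ p₂ : ℕ} {α α' : Fin p₁ → ℕ} {β β' : Fin p₂ → ℕ}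
    (h1 : GLexLT α α') (h2 : GLexLT β β' ∨ β = β') :
    GLexLT (Fin.append α β) (Fin.append α' β') := by
  have hsb : (∑ i, β i) ≤ ∑ i, β' i := glexle_sum_le h2
  rcases h1 with h1 | ⟨e1, k, pre, hk⟩
  · left; rw [sum_append, sum_append]; omega
  · rcases lt_or_eq_of_le hsb with hsb | hsb
    · left; rw [sum_append, sum_append]; omega
    · right
      refine ⟨by rw [sum_append, sum_append]; omega, Fin.castAdd p₂ k, ?_, ?_⟩
      · intro i hi
        rcases fin_add_cases i with ⟨i₀, rfl⟩ | ⟨i₀, rfl⟩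
        · rw [Fin.append_left, Fin.append_left]
          refine pre i₀ ?_
          rw [Fin.lt_def] at hi ⊢
          simpa using hi
        · exfalso
          rw [Fin.lt_def] at hi
          simp only [Fin.coe_natAdd, Fin.coe_castAdd] at hi
          have := k.isLt
          omega
      · rw [Fin.append_left, Fin.append_left]; exact hk

lemma glexlt_append_right {p₁ p₂ : ℕ} (α : Fin p₁ → ℕ) {β β' : Fin p₂ → ℕ}
    (h2 : GLexLT β β') : GLexLT (Fin.append α β) (Fin.append α β') := by
  rcases h2 with h2 | ⟨e2, k, pre, hk⟩
  · left; rw [sum_append, sum_append]; omega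
  · right
    refine ⟨by rw [sum_append, sum_append]; omega, Fin.natAdd p₁ k, ?_, ?_⟩
    · intro i hi
      rcases fin_add_cases i with ⟨i₀, rfl⟩ | ⟨i₀, rfl⟩
      · rw [Fin.append_left, Fin.append_left]
      · rw [Fin.append_right, Fin.append_right]
        refine pre i₀ ?_
        rw [Fin.lt_def] at hi ⊢
        simp only [Fin.coe_natAdd] at hi
        omega
    · rw [Fin.append_right, Fin.append_right]; exact hk

lemma glexle_append {p₁ p₂ : ℕ} {α α' : Fin p₁ → ℕ} {β β' : Fin p₂ → ℕ}
    (h1 : GLexLT α α' ∨ α = α') (h2 : GLexLT β β' ∨ β = β') :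
    GLexLT (Fin.append α β) (Fin.append α' β') ∨ Fin.append α β = Fin.append α' β' := by
  rcases h1 with h1 | rfl
  · exact Or.inl (glexlt_append_left h1 h2)
  · rcases h2 with h2 | rfl
    · exact Or.inl (glexlt_append_right _ h2)
    · exact Or.inr rfl

lemma mono_zero {p : ℕ} {κ : ℕ → Fin p → ℕ} (hκ : IsGLexEnum κ) (z : Fin p → ℂ) :
    mono κ 0 z = 1 := by
  unfold mono
  rw [enum_zero hκ]
  simp

lemma vdm_zero {p : ℕ} (κ : ℕ → Fin p → ℕ) (ξ : ℕ → Fin p → ℂ) : vdm κ 0 ξ = 1 :=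
  Matrix.det_fin_zero

lemma vdm_one {p : ℕ} {κ : ℕ → Fin p → ℕ} (hκ : IsGLexEnum κ) (ξ : ℕ → Fin p → ℂ) :
    vdm κ 1 ξ = 1 := by
  unfold vdm
  rw [Matrix.det_fin_one]
  simpa using mono_zero hκ (ξ 0)

lemma mono_append {p₁ p₂ : ℕ} {κ₁ : ℕ → Fin p₁ → ℕ} {κ₂ : ℕ → Fin p₂ → ℕ}
    {κ : ℕ → Fin (p₁ + p₂) → ℕ} {φ₁ φ₂ : ℕ → ℕ}
    (hφ : ∀ j : ℕ, κ j = Fin.append (κ₁ (φ₁ j)) (κ₂ (φ₂ j)))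
    (N : ℕ) (x : Fin p₁ → ℂ) (y : Fin p₂ → ℂ) :
    mono κ N (Fin.append x y) = mono κ₁ (φ₁ N) x * mono κ₂ (φ₂ N) y := by
  unfold mono
  rw [hφ N, Fin.prod_univ_add]
  simp [Fin.append_left, Fin.append_right]

noncomputable def cof {p : ℕ} (κ : ℕ → Fin p → ℕ) (n : ℕ) (ξ : ℕ → Fin p → ℂ)
    (N : Fin (n + 1)) : ℂ :=
  (-1 : ℂ) ^ (n + (N : ℕ)) *
    Matrix.det (Matrix.of fun M' N' : Fin n =>
      mono κ ((N.succAbove N' : Fin (n + 1)) : ℕ) (ξ (M' : ℕ)))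

lemma vdm_expand {p : ℕ} (κ : ℕ → Fin p → ℕ) (n : ℕ) (ξ : ℕ → Fin p → ℂ) (w : Fin p → ℂ) :
    vdm κ (n + 1) (Function.update ξ n w) = ∑ N : Fin (n + 1), cof κ n ξ N * mono κ (N : ℕ) w := by
  unfold vdm
  rw [Matrix.det_succ_row _ (Fin.last n)]
  refine Finset.sum_congr rfl fun N _ => ?_
  have hA : ((Matrix.of fun M N : Fin (n+1) =>
        mono κ (N : ℕ) (Function.update ξ n w (M : ℕ))).submatrix
        (Fin.last n).succAbove N.succAbove) =
      Matrix.of fun M' N' : Fin n =>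
        mono κ ((N.succAbove N' : Fin (n + 1)) : ℕ) (ξ (M' : ℕ)) := by
    ext M' N'
    simp only [Matrix.submatrix_apply, Matrix.of_apply, Fin.succAbove_last, Fin.coe_castSucc]
    congr 1
    exact Function.update_of_ne (Nat.ne_of_lt M'.isLt) _ _
  rw [hA]
  simp only [Matrix.of_apply, Fin.val_last, Function.update_self]
  unfold cof
  ring

lemma cof_last {p : ℕ} (κ : ℕ → Fin p → ℕ) (n : ℕ) (ξ : ℕ → Fin p → ℂ) :
    cof κ n ξ (Fin.last n) = vdm κ n ξ := by
  unfold cof vdm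
  rw [Fin.val_last]
  have h1 : (-1 : ℂ) ^ (n + n) = 1 := Even.neg_one_pow ⟨n, rfl⟩
  rw [h1, one_mul]
  congr 1
  ext M' N'
  simp [Fin.succAbove_last, Fin.coe_castSucc]

lemma vdm_update_eq_zero {p : ℕ} (κ : ℕ → Fin p → ℕ) (n : ℕ) (ξ : ℕ → Fin p → ℂ)
    {m : ℕ} (hm : m < n) :
    vdm κ (n + 1) (Function.update ξ n (ξ m)) = 0 := by
  unfold vdm
  apply Matrix.det_zero_of_row_eq (i := (⟨m, by omega⟩ : Fin (n + 1))) (j := Fin.last n)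
  · intro h
    have := congrArg Fin.val h
    simp only [Fin.val_last] at this
    omega
  · funext N
    simp only [Matrix.of_apply, Fin.val_last, Function.update_self]
    congr 1
    exact Function.update_of_ne (by omega) _ _

lemma master {p₁ p₂ : ℕ}
    {κ₁ : ℕ → Fin p₁ → ℕ} {κ₂ : ℕ → Fin p₂ → ℕ} {κ : ℕ → Fin (p₁ + p₂) → ℕ}
    (hκ₁ : IsGLexEnum κ₁) (hκ₂ : IsGLexEnum κ₂) (hκ : IsGLexEnum κ)
    {φ₁ φ₂ : ℕ → ℕ}
    (hφ : ∀ j : ℕ, κ j = Fin.append (κ₁ (φ₁ j)) (κ₂ (φ₂ j)))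
    (a : ℕ → Fin p₁ → ℂ) (b : ℕ → Fin p₂ → ℂ)
    {ω : ℕ → Fin (p₁ + p₂) → ℂ}
    (hω : ∀ j : ℕ, ω j = Fin.append (a (φ₁ j)) (b (φ₂ j)))
    (j : ℕ) (hD : vdm κ j ω ≠ 0)
    (z₁ : Fin p₁ → ℂ) (z₂ : Fin p₂ → ℂ) :
    vdm κ (j + 1) (Function.update ω j (Fin.append z₁ z₂)) *
        (vdm κ₁ (φ₁ j) a * vdm κ₂ (φ₂ j) b) =
      vdm κ j ω *
        (vdm κ₁ (φ₁ j + 1) (Function.update a (φ₁ j) z₁) *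
          vdm κ₂ (φ₂ j + 1) (Function.update b (φ₂ j) z₂)) := by
  classical
  have κinj : Function.Injective κ := hκ.1.1
  set ψ : ℕ → ℕ → ℕ :=
    fun m n => (Equiv.ofBijective κ hκ.1).symm (Fin.append (κ₁ m) (κ₂ n)) with hψdef
  have hψ : ∀ m n, κ (ψ m n) = Fin.append (κ₁ m) (κ₂ n) := fun m n =>
    (Equiv.ofBijective κ hκ.1).apply_symm_apply (Fin.append (κ₁ m) (κ₂ n))
  have hφψ₁ : ∀ m n, φ₁ (ψ m n) = m := fun m n =>
    hκ₁.1.1 (append_inj ((hφ (ψ m n)).symm.trans (hψ m n))).1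
  have hφψ₂ : ∀ m n, φ₂ (ψ m n) = n := fun m n =>
    hκ₂.1.1 (append_inj ((hφ (ψ m n)).symm.trans (hψ m n))).2
  have hψφ : ∀ N : ℕ, ψ (φ₁ N) (φ₂ N) = N := by
    intro N
    apply κinj
    rw [hψ, ← hφ]
  have hle : ∀ m n, m ≤ φ₁ j → n ≤ φ₂ j → ψ m n ≤ j := by
    intro m n hm hn
    apply enum_le hκ
    rw [hψ, hφ j]
    exact glexle_append (enum_mono_le hκ₁ hm) (enum_mono_le hκ₂ hn)
  have hlt : ∀ M, M < j → φ₁ M < φ₁ j ∨ φ₂ M < φ₂ j := by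
    intro M hM
    by_contra hc
    push_neg at hc
    have : j ≤ M := by
      apply enum_le hκ
      rw [hφ j, hφ M]
      exact glexle_append (enum_mono_le hκ₁ hc.1) (enum_mono_le hκ₂ hc.2)
    omega
  set ρ : Fin (j + 1) → ℂ := fun N =>
    if h : φ₁ (N : ℕ) ≤ (φ₁ j) ∧ φ₂ (N : ℕ) ≤ (φ₂ j) then
      cof κ₁ (φ₁ j) a ⟨φ₁ (N : ℕ), by omega⟩ * cof κ₂ (φ₂ j) b ⟨φ₂ (N : ℕ), by omega⟩
    else 0 with hρ
  set γ : Fin (j + 1) → ℂ := fun N =>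
    vdm κ₁ (φ₁ j) a * vdm κ₂ (φ₂ j) b * cof κ j ω N - vdm κ j ω * ρ N with hγ
  -- reindexing
  have key : ∀ (w₁ : Fin p₁ → ℂ) (w₂ : Fin p₂ → ℂ),
      ∑ N : Fin (j + 1), ρ N * mono κ (N : ℕ) (Fin.append w₁ w₂)
        = (∑ N₁ : Fin ((φ₁ j) + 1), cof κ₁ (φ₁ j) a N₁ * mono κ₁ (N₁ : ℕ) w₁) *
          (∑ N₂ : Fin ((φ₂ j) + 1), cof κ₂ (φ₂ j) b N₂ * mono κ₂ (N₂ : ℕ) w₂) := by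
    intro w₁ w₂
    have hstep1 : ∑ N : Fin (j + 1), ρ N * mono κ (N : ℕ) (Fin.append w₁ w₂)
        = ∑ N ∈ Finset.univ.filter
            (fun N : Fin (j + 1) => φ₁ (N : ℕ) ≤ (φ₁ j) ∧ φ₂ (N : ℕ) ≤ (φ₂ j)),
            ρ N * mono κ (N : ℕ) (Fin.append w₁ w₂) := by
      refine (Finset.sum_filter_of_ne ?_).symm
      intro N _ hne
      by_contra hc
      apply hne
      simp only [hρ, dif_neg hc, zero_mul]
    have hstep2 : (∑ N₁ : Fin ((φ₁ j) + 1), cof κ₁ (φ₁ j) a N₁ * mono κ₁ (N₁ : ℕ) w₁) *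
        (∑ N₂ : Fin ((φ₂ j) + 1), cof κ₂ (φ₂ j) b N₂ * mono κ₂ (N₂ : ℕ) w₂)
        = ∑ x : Fin ((φ₁ j) + 1) × Fin ((φ₂ j) + 1),
            (cof κ₁ (φ₁ j) a x.1 * mono κ₁ (x.1 : ℕ) w₁) *
            (cof κ₂ (φ₂ j) b x.2 * mono κ₂ (x.2 : ℕ) w₂) := by
      rw [Finset.sum_mul_sum, Fintype.sum_prod_type]
    rw [hstep1, hstep2]
    refine Finset.sum_nbij'
      (fun N => (⟨min (φ₁ (N : ℕ)) (φ₁ j), by omega⟩, ⟨min (φ₂ (N : ℕ)) (φ₂ j), by omega⟩))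
      (fun x => ⟨ψ (x.1 : ℕ) (x.2 : ℕ),
        Nat.lt_succ_of_le (hle _ _ (Nat.lt_succ_iff.mp x.1.isLt) (Nat.lt_succ_iff.mp x.2.isLt))⟩)
      (fun N _ => Finset.mem_univ _) ?_ ?_ ?_ ?_
    · intro x _
      simp only [Finset.mem_filter]
      refine ⟨Finset.mem_univ _, ?_, ?_⟩
      · show φ₁ (ψ (x.1 : ℕ) (x.2 : ℕ)) ≤ (φ₁ j)
        rw [hφψ₁]
        exact Nat.lt_succ_iff.mp x.1.isLt
      · show φ₂ (ψ (x.1 : ℕ) (x.2 : ℕ)) ≤ (φ₂ j)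
        rw [hφψ₂]
        exact Nat.lt_succ_iff.mp x.2.isLt
    · intro N hN
      obtain ⟨-, h1, h2⟩ := Finset.mem_filter.mp hN
      apply Fin.ext
      show ψ (min (φ₁ (N : ℕ)) (φ₁ j)) (min (φ₂ (N : ℕ)) (φ₂ j)) = (N : ℕ)
      rw [Nat.min_eq_left h1, Nat.min_eq_left h2, hψφ]
    · intro x _
      have e1 : φ₁ (ψ (x.1 : ℕ) (x.2 : ℕ)) = (x.1 : ℕ) := hφψ₁ _ _
      have e2 : φ₂ (ψ (x.1 : ℕ) (x.2 : ℕ)) = (x.2 : ℕ) := hφψ₂ _ _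
      refine Prod.ext ?_ ?_
      · apply Fin.ext
        show min (φ₁ (ψ (x.1 : ℕ) (x.2 : ℕ))) (φ₁ j) = (x.1 : ℕ)
        rw [e1]
        exact Nat.min_eq_left (Nat.lt_succ_iff.mp x.1.isLt)
      · apply Fin.ext
        show min (φ₂ (ψ (x.1 : ℕ) (x.2 : ℕ))) (φ₂ j) = (x.2 : ℕ)
        rw [e2]
        exact Nat.min_eq_left (Nat.lt_succ_iff.mp x.2.isLt)
    · intro N hN
      obtain ⟨-, h1, h2⟩ := Finset.mem_filter.mp hN
      simp only [hρ]
      rw [dif_pos ⟨h1, h2⟩, mono_append hφ]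
      simp only [Nat.min_eq_left h1, Nat.min_eq_left h2]
      ring
  -- expansion identity
  have claim1 : ∀ (w₁ : Fin p₁ → ℂ) (w₂ : Fin p₂ → ℂ),
      ∑ N : Fin (j + 1), γ N * mono κ (N : ℕ) (Fin.append w₁ w₂)
        = vdm κ (j + 1) (Function.update ω j (Fin.append w₁ w₂)) *
            (vdm κ₁ (φ₁ j) a * vdm κ₂ (φ₂ j) b) -
          vdm κ j ω * (vdm κ₁ ((φ₁ j) + 1) (Function.update a (φ₁ j) w₁) *
            vdm κ₂ ((φ₂ j) + 1) (Function.update b (φ₂ j) w₂)) := by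
    intro w₁ w₂
    rw [vdm_expand κ j ω (Fin.append w₁ w₂), vdm_expand κ₁ (φ₁ j) a w₁, vdm_expand κ₂ (φ₂ j) b w₂,
      ← key w₁ w₂, Finset.sum_mul, Finset.mul_sum, ← Finset.sum_sub_distrib]
    refine Finset.sum_congr rfl fun N _ => ?_
    simp only [hγ]
    ring
  -- vanishing at the interpolation points
  have claim2 : ∀ M : Fin j, ∑ N : Fin (j + 1), γ N * mono κ (N : ℕ) (ω (M : ℕ)) = 0 := by
    intro M
    have h1 := claim1 (a (φ₁ (M : ℕ))) (b (φ₂ (M : ℕ)))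
    rw [← hω (M : ℕ)] at h1
    rw [h1, vdm_update_eq_zero κ j ω M.isLt]
    rcases hlt (M : ℕ) M.isLt with h | h
    · rw [vdm_update_eq_zero κ₁ (φ₁ j) a h]; ring
    · rw [vdm_update_eq_zero κ₂ (φ₂ j) b h]; ring
  -- last coefficient vanishes
  have hγlast : γ (Fin.last j) = 0 := by
    have hρlast : ρ (Fin.last j) = vdm κ₁ (φ₁ j) a * vdm κ₂ (φ₂ j) b := by
      simp only [hρ, Fin.val_last]
      rw [dif_pos ⟨le_refl _, le_refl _⟩]
      have e1 : ∀ h : φ₁ j < (φ₁ j) + 1, (⟨φ₁ j, h⟩ : Fin ((φ₁ j) + 1)) = Fin.last (φ₁ j) := fun h =>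
        Fin.ext (by rw [Fin.val_last])
      have e2 : ∀ h : φ₂ j < (φ₂ j) + 1, (⟨φ₂ j, h⟩ : Fin ((φ₂ j) + 1)) = Fin.last (φ₂ j) := fun h =>
        Fin.ext (by rw [Fin.val_last])
      rw [e1, e2, cof_last, cof_last]
    simp only [hγ]
    rw [hρlast, cof_last]
    ring
  -- solve the linear system
  have hγzero : ∀ N, γ N = 0 := by
    have hsys : (Matrix.of fun M N' : Fin j => mono κ (N' : ℕ) (ω (M : ℕ))).mulVec
        (fun N' => γ (Fin.castSucc N')) = 0 := by
      funext M
      have h2 := claim2 M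
      rw [Fin.sum_univ_castSucc, hγlast, zero_mul, add_zero] at h2
      simp only [Fin.coe_castSucc] at h2
      simp only [Matrix.mulVec, dotProduct, Matrix.of_apply, Pi.zero_apply]
      rw [← h2]
      exact Finset.sum_congr rfl fun N' _ => mul_comm _ _
    have hv := Matrix.eq_zero_of_mulVec_eq_zero (by exact hD) hsys
    intro N
    refine Fin.lastCases hγlast (fun N' => ?_) N
    exact congrFun hv N'
  have hz := claim1 z₁ z₂
  have h0 : vdm κ (j + 1) (Function.update ω j (Fin.append z₁ z₂)) *
      (vdm κ₁ (φ₁ j) a * vdm κ₂ (φ₂ j) b) -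
      vdm κ j ω * (vdm κ₁ ((φ₁ j) + 1) (Function.update a (φ₁ j) z₁) *
        vdm κ₂ ((φ₂ j) + 1) (Function.update b (φ₂ j) z₂)) = 0 :=
    hz.symm.trans (Finset.sum_eq_zero fun N _ => by rw [hγzero N, zero_mul])
  exact sub_eq_zero.mp h0

lemma vdm_omega_ne_zero {p₁ p₂ : ℕ}
    {κ₁ : ℕ → Fin p₁ → ℕ} {κ₂ : ℕ → Fin p₂ → ℕ} {κ : ℕ → Fin (p₁ + p₂) → ℕ}
    (hκ₁ : IsGLexEnum κ₁) (hκ₂ : IsGLexEnum κ₂) (hκ : IsGLexEnum κ)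
    {φ₁ φ₂ : ℕ → ℕ}
    (hφ : ∀ j : ℕ, κ j = Fin.append (κ₁ (φ₁ j)) (κ₂ (φ₂ j)))
    (a : ℕ → Fin p₁ → ℂ) (b : ℕ → Fin p₂ → ℂ)
    (ha : ∀ j : ℕ, 1 ≤ j → vdm κ₁ j a ≠ 0)
    (hb : ∀ j : ℕ, 1 ≤ j → vdm κ₂ j b ≠ 0)
    {ω : ℕ → Fin (p₁ + p₂) → ℂ}
    (hω : ∀ j : ℕ, ω j = Fin.append (a (φ₁ j)) (b (φ₂ j)))
    (j : ℕ) : vdm κ j ω ≠ 0 := by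
  have ha' : ∀ m : ℕ, vdm κ₁ m a ≠ 0 := by
    intro m
    rcases Nat.eq_zero_or_pos m with rfl | h
    · rw [vdm_zero]; exact one_ne_zero
    · exact ha m h
  have hb' : ∀ m : ℕ, vdm κ₂ m b ≠ 0 := by
    intro m
    rcases Nat.eq_zero_or_pos m with rfl | h
    · rw [vdm_zero]; exact one_ne_zero
    · exact hb m h
  induction j with
  | zero => rw [vdm_zero]; exact one_ne_zero
  | succ j ih =>
    have h := master hκ₁ hκ₂ hκ hφ a b hω j ih (a (φ₁ j)) (b (φ₂ j))
    rw [← hω j, Function.update_eq_self, Function.update_eq_self,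
      Function.update_eq_self] at h
    intro h0
    rw [h0, zero_mul] at h
    exact mul_ne_zero ih (mul_ne_zero (ha' _) (hb' _)) h.symm

/-- Vandermonde identities for the intertwining sequence `Ω = A ⊕ B`:
with `r = φ₁(j)` and `s = φ₂(j)`, the determinant `vdm(ω_0,…,ω_{j-1}, z)` factorizes through
the univariate-block determinants of `A` and `B`, in the three cases
`r,s > 0`; `r > 0, s = 0`; `r = 0, s > 0`. -/
theorem vdm_intertwining_identities {p₁ p₂ : ℕ} (hp₁ : 1 ≤ p₁) (hp₂ : 1 ≤ p₂)
    (κ₁ : ℕ → Fin p₁ → ℕ) (κ₂ : ℕ → Fin p₂ → ℕ) (κ : ℕ → Fin (p₁ + p₂) → ℕ)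
    (hκ₁ : IsGLexEnum κ₁) (hκ₂ : IsGLexEnum κ₂) (hκ : IsGLexEnum κ)
    (φ₁ φ₂ : ℕ → ℕ)
    (hφ : ∀ j : ℕ, κ j = Fin.append (κ₁ (φ₁ j)) (κ₂ (φ₂ j)))
    (a : ℕ → Fin p₁ → ℂ) (b : ℕ → Fin p₂ → ℂ)
    (ha : ∀ j : ℕ, 1 ≤ j → vdm κ₁ j a ≠ 0)
    (hb : ∀ j : ℕ, 1 ≤ j → vdm κ₂ j b ≠ 0)
    (ω : ℕ → Fin (p₁ + p₂) → ℂ)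
    (hω : ∀ j : ℕ, ω j = Fin.append (a (φ₁ j)) (b (φ₂ j)))
    (j : ℕ) (hj : 1 ≤ j) (r s : ℕ) (hr : r = φ₁ j) (hs : s = φ₂ j)
    (z₁ : Fin p₁ → ℂ) (z₂ : Fin p₂ → ℂ) :
    (0 < r → 0 < s →
      vdm κ (j + 1) (Function.update ω j (Fin.append z₁ z₂)) *
          vdm κ₁ r a * vdm κ₂ s b =
        vdm κ j ω * vdm κ₁ (r + 1) (Function.update a r z₁) *
          vdm κ₂ (s + 1) (Function.update b s z₂)) ∧
    (0 < r → s = 0 →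
      vdm κ (j + 1) (Function.update ω j (Fin.append z₁ z₂)) * vdm κ₁ r a =
        vdm κ j ω * vdm κ₁ (r + 1) (Function.update a r z₁)) ∧
    (r = 0 → 0 < s →
      vdm κ (j + 1) (Function.update ω j (Fin.append z₁ z₂)) * vdm κ₂ s b =
        vdm κ j ω * vdm κ₂ (s + 1) (Function.update b s z₂)) := by
  subst hr hs
  have hD := vdm_omega_ne_zero hκ₁ hκ₂ hκ hφ a b ha hb hω j
  have h := master hκ₁ hκ₂ hκ hφ a b hω j hD z₁ z₂
  refine ⟨fun _ _ => by linear_combination h, fun _ hs0 => ?_, fun hr0 _ => ?_⟩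
  · rw [hs0] at h
    rw [vdm_zero, vdm_one hκ₂] at h
    linear_combination h
  · rw [hr0] at h
    rw [vdm_zero, vdm_one hκ₁] at h
    linear_combination h

end PseudoLeja
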